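/- Let 𝒳 = 𝒳^1 × 𝒳^2 where 𝒳^j = ∏_{i=1}^n 𝒳_i^j, let W_1(y_1|x^1) and W_2(y_2|x^2) be privacy channels on 𝒳^1 and 𝒳^2, and define the channels on 𝒳: U_1(y_1|x) = W_1(y_1|x^1) and U_2(y_2|x) = W_2(y_2|x^2). Suppose W_j satisfies ε_j-information privacy with respect to ℙ_b^j and is (b,δ_j)-balanced, for j ∈ {1,2}. Let K_1 = sup over joint input distributions Q on 𝒳 and i ∈ [n] of I(X_i^2; Y_1) (the information about a coordinate of the second dataset leaked through channel U_1) and K_2 = sup over joint input distributions Q on 𝒳 and i ∈ [n] of I(X_i^1; Y_2). Then the composition channel p(y|x) = W_1(y_1|x^1)W_2(y_2|x^2) satisfies: for every joint input distribution X on 𝒳 and every i ∈ [n], I(X_i; (Y_1,Y_2)) ≤ ε_1 + ε_2 + δ_1 + δ_2 + K_1 + K_2, where X_i = (X_i^1, X_i^2). -/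

import Mathlib

open scoped BigOperators

/-- `p` is a probability mass function on the finite type `Ω`. -/
def IsPMF {Ω : Type*} [Fintype Ω] (p : Ω → ℝ) : Prop :=
  (∀ x, 0 ≤ p x) ∧ ∑ x, p x = 1

/-- A (privacy) channel: every row is a probability distribution on the output set. -/
def IsChannel {Ω 𝒴 : Type*} [Fintype Ω] [Fintype 𝒴] (W : Ω → 𝒴 → ℝ) : Prop :=
  ∀ x, IsPMF (W x)

/-- Shannon entropy (base 2). -/
noncomputable def entropy {Ω : Type*} [Fintype Ω] (p : Ω → ℝ) : ℝ :=
  -∑ x, p x * Real.logb 2 (p x)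

/-- Mutual information (base 2) of a joint distribution on `α × β`. -/
noncomputable def mutualInfo {α β : Type*} [Fintype α] [Fintype β] (j : α × β → ℝ) : ℝ :=
  ∑ a, ∑ b, j (a, b) *
    Real.logb 2 (j (a, b) / ((∑ b', j (a, b')) * (∑ a', j (a', b))))

/-- Joint distribution of `f(X)` and the output `Y` of channel `U` with input `X ∼ p`. -/
noncomputable def jointMapOut {Ω γ 𝒴 : Type*} [Fintype Ω] [Fintype γ] [DecidableEq γ]
    [Fintype 𝒴] (p : Ω → ℝ) (U : Ω → 𝒴 → ℝ) (f : Ω → γ) : γ × 𝒴 → ℝ :=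
  fun z => ∑ x, if f x = z.1 then p x * U x z.2 else 0

/-- The set of all probability distributions on `Ω`. -/
def allPMF (Ω : Type*) [Fintype Ω] : Set (Ω → ℝ) := {p | IsPMF p}

/-- The set of all probability distributions on `Ω` with Shannon entropy at least `b`. -/
def PMFb (Ω : Type*) [Fintype Ω] (b : ℝ) : Set (Ω → ℝ) := {p | IsPMF p ∧ b ≤ entropy p}

/-- Individual channel capacity of the channel `W` with respect to a set `Δ` of
input distributions: the sup over `X ∈ Δ` and coordinates `i` of `I(X_i; Y)`. -/
noncomputable def indCap {n : ℕ} {𝒳 : Fin n → Type*} [∀ i, Fintype (𝒳 i)]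
    [∀ i, DecidableEq (𝒳 i)] {𝒴 : Type*} [Fintype 𝒴]
    (W : (∀ i, 𝒳 i) → 𝒴 → ℝ) (Δ : Set ((∀ i, 𝒳 i) → ℝ)) : ℝ :=
  sSup {r | ∃ p ∈ Δ, ∃ i : Fin n, r = mutualInfo (jointMapOut p W (fun x => x i))}

-- Auxiliary lemmas

lemma channel_nonneg {Ω 𝒴 : Type*} [Fintype Ω] [Fintype 𝒴] {W : Ω → 𝒴 → ℝ}
    (hW : IsChannel W) (x : Ω) (y : 𝒴) : 0 ≤ W x y := (hW x).1 y

lemma channel_le_one {Ω 𝒴 : Type*} [Fintype Ω] [Fintype 𝒴] {W : Ω → 𝒴 → ℝ}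
    (hW : IsChannel W) (x : Ω) (y : 𝒴) : W x y ≤ 1 := by
  calc W x y ≤ ∑ y', W x y' :=
        Finset.single_le_sum (fun y' _ => (hW x).1 y') (Finset.mem_univ y)
    _ = 1 := (hW x).2

lemma mul_neg_logb_le_two {x : ℝ} (h0 : 0 < x) (h1 : x ≤ 1) : x * (-Real.logb 2 x) ≤ 2 := by
  have hinv : Real.log x⁻¹ ≤ x⁻¹ - 1 := Real.log_le_sub_one_of_pos (by positivity)
  rw [Real.log_inv] at hinv
  have hx : x * (-Real.log x) ≤ 1 - x := by
    have := mul_le_mul_of_nonneg_left hinv (le_of_lt h0)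
    rw [mul_sub, mul_inv_cancel₀ (ne_of_gt h0)] at this
    linarith
  have hlog2 : (0.6931471803 : ℝ) < Real.log 2 := Real.log_two_gt_d9
  have : x * (-Real.logb 2 x) = (x * (-Real.log x)) / Real.log 2 := by
    rw [Real.logb]; ring
  rw [this]
  rw [div_le_iff₀ (by linarith)]
  nlinarith

lemma mutualInfo_le_two_card {γ 𝒴 : Type*} [Fintype γ] [Fintype 𝒴] (j : γ × 𝒴 → ℝ)
    (hj : IsPMF j) : mutualInfo j ≤ 2 * Fintype.card 𝒴 := by
  obtain ⟨h0, h1⟩ := hj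
  have htot : ∑ y, ∑ a, j (a, y) = 1 := by
    rw [← h1, Fintype.sum_prod_type_right]
  unfold mutualInfo
  rw [Finset.sum_comm]
  have hbound : ∀ y : 𝒴, (∑ a, j (a, y) *
      Real.logb 2 (j (a, y) / ((∑ b', j (a, b')) * (∑ a', j (a', y))))) ≤ 2 := by
    intro y
    set cy := ∑ a', j (a', y) with hcy
    have hcynn : 0 ≤ cy := Finset.sum_nonneg fun a _ => h0 _
    have hcyle : cy ≤ 1 := by
      rw [← htot]
      exact Finset.single_le_sum (f := fun y => ∑ a, j (a, y))
        (fun y' _ => Finset.sum_nonneg fun a _ => h0 _) (Finset.mem_univ y)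
    have hstep : ∀ a : γ, j (a, y) *
        Real.logb 2 (j (a, y) / ((∑ b', j (a, b')) * cy)) ≤ j (a, y) * (-Real.logb 2 cy) := by
      intro a
      rcases eq_or_lt_of_le (h0 (a, y)) with h | h
      · rw [← h]; simp
      · have hra : j (a, y) ≤ ∑ b', j (a, b') :=
          Finset.single_le_sum (fun b' _ => h0 _) (Finset.mem_univ y)
        have hrapos : 0 < ∑ b', j (a, b') := lt_of_lt_of_le h hra
        have hcypos : 0 < cy := lt_of_lt_of_le h
          (Finset.single_le_sum (f := fun a' => j (a', y)) (fun a' _ => h0 _) (Finset.mem_univ a))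
        apply mul_le_mul_of_nonneg_left _ (le_of_lt h)
        rw [← Real.logb_inv]
        apply Real.logb_le_logb_of_le one_lt_two (by positivity)
        rw [div_le_iff₀ (by positivity)]
        have hr : cy⁻¹ * ((∑ b', j (a, b')) * cy) = ∑ b', j (a, b') := by
          field_simp
        rw [hr]
        exact hra
    calc (∑ a, j (a, y) * Real.logb 2 (j (a, y) / ((∑ b', j (a, b')) * cy)))
        ≤ ∑ a, j (a, y) * (-Real.logb 2 cy) := Finset.sum_le_sum fun a _ => hstep a
      _ = cy * (-Real.logb 2 cy) := by rw [← Finset.sum_mul]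
      _ ≤ 2 := by
          rcases eq_or_lt_of_le hcynn with h | h
          · rw [← h]; simp
          · exact mul_neg_logb_le_two h hcyle
  calc (∑ y, ∑ a, j (a, y) * Real.logb 2
        (j (a, y) / ((∑ b', j (a, b')) * (∑ a', j (a', y)))))
      ≤ ∑ _y : 𝒴, (2:ℝ) := Finset.sum_le_sum fun y _ => hbound y
    _ = 2 * Fintype.card 𝒴 := by
        rw [Finset.sum_const, Finset.card_univ, nsmul_eq_mul, mul_comm]

lemma jointMapOut_isPMF {Ω γ 𝒴 : Type*} [Fintype Ω] [Fintype γ] [DecidableEq γ]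
    [Fintype 𝒴] {p : Ω → ℝ} {U : Ω → 𝒴 → ℝ} (hp : IsPMF p) (hU : IsChannel U)
    (f : Ω → γ) : IsPMF (jointMapOut p U f) := by
  constructor
  · intro z
    apply Finset.sum_nonneg
    intro x _
    split_ifs
    · exact mul_nonneg (hp.1 x) ((hU x).1 z.2)
    · exact le_refl 0
  · rw [Fintype.sum_prod_type]
    have : ∀ g : γ, ∀ y : 𝒴, jointMapOut p U f (g, y)
        = ∑ x, if f x = g then p x * U x y else 0 := fun _ _ => rfl
    calc (∑ g, ∑ y, jointMapOut p U f (g, y))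
        = ∑ g, ∑ y, ∑ x, if f x = g then p x * U x y else 0 := rfl
      _ = ∑ g, ∑ x, ∑ y, if f x = g then p x * U x y else 0 :=
          Finset.sum_congr rfl fun g _ => Finset.sum_comm
      _ = ∑ x, ∑ g, ∑ y, if f x = g then p x * U x y else 0 := Finset.sum_comm
      _ = ∑ x, ∑ g, if f x = g then p x * (∑ y, U x y) else 0 := by
          refine Finset.sum_congr rfl fun x _ => Finset.sum_congr rfl fun g _ => ?_
          split_ifs
          · rw [Finset.mul_sum]
          · simp
      _ = ∑ x, p x * (∑ y, U x y) := by
          refine Finset.sum_congr rfl fun x _ => ?_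
          simp [Finset.sum_ite_eq]
      _ = 1 := by
          refine Eq.trans (Finset.sum_congr rfl fun x _ => ?_) hp.2
          rw [(hU x).2, mul_one]

lemma div_scale {x y z c : ℝ} (hc : c ≠ 0) : (x / c) / ((y / c) * (z / c)) = x * c / (y * z) := by
  rw [div_mul_div_comm, div_div_eq_mul_div]
  have h : x / c * (c * c) = x * c := by
    field_simp
  rw [h]

lemma slice_bound {G Y : Type*} [Fintype G] [Fintype Y] (m : G → Y → ℝ)
    (row : G → ℝ) (col : Y → ℝ) (c S : ℝ)
    (hm : ∀ g y, 0 ≤ m g y)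
    (hrow : ∀ g, row g = ∑ y, m g y) (hcol : ∀ y, col y = ∑ g, m g y)
    (hc : c = ∑ g, ∑ y, m g y)
    (hS : c ≠ 0 → mutualInfo (fun z : G × Y => m z.1 z.2 / c) ≤ S) :
    (∑ g, ∑ y, m g y * Real.logb 2 (m g y * c / (row g * col y))) ≤ c * S := by
  by_cases hc0 : c = 0
  · have hz : ∀ g y, m g y = 0 := by
      intro g y
      have h1 : ∑ g, ∑ y, m g y = 0 := by rw [← hc, hc0]
      have h2 : ∀ g ∈ Finset.univ, (0:ℝ) ≤ ∑ y, m g y :=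
        fun g _ => Finset.sum_nonneg fun y _ => hm g y
      have h3 : (∑ y, m g y) = 0 :=
        (Finset.sum_eq_zero_iff_of_nonneg h2).mp h1 g (Finset.mem_univ g)
      exact (Finset.sum_eq_zero_iff_of_nonneg (fun y _ => hm g y)).mp h3 y (Finset.mem_univ y)
    rw [hc0]
    simp [hz]
  · have hcnn : (0:ℝ) ≤ c := by
      rw [hc]
      exact Finset.sum_nonneg fun g _ => Finset.sum_nonneg fun y _ => hm g y
    have hcpos : 0 < c := lt_of_le_of_ne hcnn (Ne.symm hc0)
    have hMI : mutualInfo (fun z : G × Y => m z.1 z.2 / c)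
        = ∑ g, ∑ y, (m g y / c) * Real.logb 2 (m g y * c / (row g * col y)) := by
      unfold mutualInfo
      refine Finset.sum_congr rfl fun g _ => Finset.sum_congr rfl fun y _ => ?_
      have h1 : (∑ b' : Y, m g b' / c) = row g / c := by
        rw [hrow, Finset.sum_div]
      have h2 : (∑ a' : G, m a' y / c) = col y / c := by
        rw [hcol, Finset.sum_div]
      rw [h1, h2, div_scale hc0]
    have := hS hc0
    rw [hMI] at this
    have h4 : (∑ g, ∑ y, m g y * Real.logb 2 (m g y * c / (row g * col y)))
        = c * ∑ g, ∑ y, (m g y / c) * Real.logb 2 (m g y * c / (row g * col y)) := by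
      rw [Finset.mul_sum]
      refine Finset.sum_congr rfl fun g _ => ?_
      rw [Finset.mul_sum]
      refine Finset.sum_congr rfl fun y _ => ?_
      rw [← mul_assoc, mul_div_cancel₀ _ hc0]
    rw [h4]
    exact mul_le_mul_of_nonneg_left this (le_of_lt hcpos)

noncomputable def nuF {Ω γ1 γ2 𝒴₁ 𝒴₂ : Type*} [Fintype Ω] [DecidableEq γ1] [DecidableEq γ2]
    (V1 : Ω → 𝒴₁ → ℝ) (V2 : Ω → 𝒴₂ → ℝ) (f : Ω → γ1) (g : Ω → γ2) (p : Ω → ℝ)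
    (a : γ1) (b : γ2) (y1 : 𝒴₁) (y2 : 𝒴₂) : ℝ :=
  ∑ x, if f x = a ∧ g x = b then p x * (V1 x y1 * V2 x y2) else 0

noncomputable def mabF {Ω γ1 γ2 : Type*} [Fintype Ω] [DecidableEq γ1] [DecidableEq γ2]
    (f : Ω → γ1) (g : Ω → γ2) (p : Ω → ℝ) (a : γ1) (b : γ2) : ℝ :=
  ∑ x, if f x = a ∧ g x = b then p x else 0

noncomputable def maF {Ω γ1 : Type*} [Fintype Ω] [DecidableEq γ1]
    (f : Ω → γ1) (p : Ω → ℝ) (a : γ1) : ℝ :=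
  ∑ x, if f x = a then p x else 0

noncomputable def my1F {Ω 𝒴₁ : Type*} [Fintype Ω]
    (V1 : Ω → 𝒴₁ → ℝ) (p : Ω → ℝ) (y1 : 𝒴₁) : ℝ :=
  ∑ x, p x * V1 x y1

noncomputable def may1F {Ω γ1 𝒴₁ : Type*} [Fintype Ω] [DecidableEq γ1]
    (V1 : Ω → 𝒴₁ → ℝ) (f : Ω → γ1) (p : Ω → ℝ) (a : γ1) (y1 : 𝒴₁) : ℝ :=
  ∑ x, if f x = a then p x * V1 x y1 else 0

noncomputable def maby1F {Ω γ1 γ2 𝒴₁ : Type*} [Fintype Ω] [DecidableEq γ1] [DecidableEq γ2]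
    (V1 : Ω → 𝒴₁ → ℝ) (f : Ω → γ1) (g : Ω → γ2) (p : Ω → ℝ) (a : γ1) (b : γ2) (y1 : 𝒴₁) : ℝ :=
  ∑ x, if f x = a ∧ g x = b then p x * V1 x y1 else 0

noncomputable def mby1F {Ω γ2 𝒴₁ : Type*} [Fintype Ω] [DecidableEq γ2]
    (V1 : Ω → 𝒴₁ → ℝ) (g : Ω → γ2) (p : Ω → ℝ) (b : γ2) (y1 : 𝒴₁) : ℝ :=
  ∑ x, if g x = b then p x * V1 x y1 else 0

noncomputable def mbyyF {Ω γ2 𝒴₁ 𝒴₂ : Type*} [Fintype Ω] [DecidableEq γ2]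
    (V1 : Ω → 𝒴₁ → ℝ) (V2 : Ω → 𝒴₂ → ℝ) (g : Ω → γ2) (p : Ω → ℝ) (b : γ2) (y1 : 𝒴₁) (y2 : 𝒴₂) : ℝ :=
  ∑ x, if g x = b then p x * (V1 x y1 * V2 x y2) else 0

noncomputable def myyF {Ω 𝒴₁ 𝒴₂ : Type*} [Fintype Ω]
    (V1 : Ω → 𝒴₁ → ℝ) (V2 : Ω → 𝒴₂ → ℝ) (p : Ω → ℝ) (y1 : 𝒴₁) (y2 : 𝒴₂) : ℝ :=
  ∑ x, p x * (V1 x y1 * V2 x y2)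

lemma core_decomp {Ω γ1 γ2 𝒴₁ 𝒴₂ : Type*} [Fintype Ω] [Fintype γ1] [Fintype γ2]
    [DecidableEq γ1] [DecidableEq γ2] [Fintype 𝒴₁] [Fintype 𝒴₂]
    {V1 : Ω → 𝒴₁ → ℝ} (hV1 : IsChannel V1) {V2 : Ω → 𝒴₂ → ℝ} (hV2 : IsChannel V2)
    (f : Ω → γ1) (g : Ω → γ2) {p : Ω → ℝ} (hp : IsPMF p)
    {S1 S2 S3 S4 : ℝ}
    (H1 : ∀ q : Ω → ℝ, IsPMF q → mutualInfo (jointMapOut q V1 f) ≤ S1)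
    (H2 : ∀ q : Ω → ℝ, IsPMF q → mutualInfo (jointMapOut q V1 g) ≤ S2)
    (H3 : ∀ q : Ω → ℝ, IsPMF q → mutualInfo (jointMapOut q V2 g) ≤ S3)
    (H4 : ∀ q : Ω → ℝ, IsPMF q → mutualInfo (jointMapOut q V2 f) ≤ S4) :
    mutualInfo (jointMapOut p (fun x (y : 𝒴₁ × 𝒴₂) => V1 x y.1 * V2 x y.2) (fun x => (f x, g x)))
      ≤ S1 + S2 + S3 + S4 := by
  classical
  obtain ⟨hp0, hp1⟩ := hp
  -- nonnegativity of the basic joint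
  have nn_nu : ∀ a b y1 y2, 0 ≤ nuF V1 V2 f g p a b y1 y2 := by
    intro a b y1 y2
    refine Finset.sum_nonneg fun x _ => ?_
    split_ifs
    · exact mul_nonneg (hp0 x) (mul_nonneg (channel_nonneg hV1 x y1) (channel_nonneg hV2 x y2))
    · exact le_refl 0
  have nn_may1 : ∀ a y1, 0 ≤ may1F V1 f p a y1 := by
    intro a y1
    refine Finset.sum_nonneg fun x _ => ?_
    split_ifs
    · exact mul_nonneg (hp0 x) (channel_nonneg hV1 x y1)
    · exact le_refl 0
  have nn_maby1 : ∀ a b y1, 0 ≤ maby1F V1 f g p a b y1 := by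
    intro a b y1
    refine Finset.sum_nonneg fun x _ => ?_
    split_ifs
    · exact mul_nonneg (hp0 x) (channel_nonneg hV1 x y1)
    · exact le_refl 0
  have nn_mbyy : ∀ b y1 y2, 0 ≤ mbyyF V1 V2 g p b y1 y2 := by
    intro b y1 y2
    refine Finset.sum_nonneg fun x _ => ?_
    split_ifs
    · exact mul_nonneg (hp0 x) (mul_nonneg (channel_nonneg hV1 x y1) (channel_nonneg hV2 x y2))
    · exact le_refl 0
  -- pointwise domination of the joint by each marginal
  have pbound : ∀ (x : Ω) (y1 : 𝒴₁) (y2 : 𝒴₂), p x * (V1 x y1 * V2 x y2) ≤ p x := by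
    intro x y1 y2
    calc p x * (V1 x y1 * V2 x y2) ≤ p x * 1 := by
          refine mul_le_mul_of_nonneg_left ?_ (hp0 x)
          exact mul_le_one₀ (channel_le_one hV1 x y1) (channel_nonneg hV2 x y2)
            (channel_le_one hV2 x y2)
      _ = p x := mul_one _
  have pvbound : ∀ (x : Ω) (y1 : 𝒴₁) (y2 : 𝒴₂),
      p x * (V1 x y1 * V2 x y2) ≤ p x * V1 x y1 := by
    intro x y1 y2
    calc p x * (V1 x y1 * V2 x y2) = p x * V1 x y1 * V2 x y2 := by ring
      _ ≤ p x * V1 x y1 * 1 := by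
          refine mul_le_mul_of_nonneg_left ?_
            (mul_nonneg (hp0 x) (channel_nonneg hV1 x y1))
          exact channel_le_one hV2 x y2
      _ = p x * V1 x y1 := mul_one _
  have le_mab : ∀ a b y1 y2, nuF V1 V2 f g p a b y1 y2 ≤ mabF f g p a b := by
    intro a b y1 y2
    refine Finset.sum_le_sum fun x _ => ?_
    by_cases hc : f x = a ∧ g x = b
    · rw [if_pos hc, if_pos hc]
      exact pbound x y1 y2
    · rw [if_neg hc, if_neg hc]
  have le_ma : ∀ a b y1 y2, nuF V1 V2 f g p a b y1 y2 ≤ maF f p a := by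
    intro a b y1 y2
    refine Finset.sum_le_sum fun x _ => ?_
    by_cases hc : f x = a ∧ g x = b
    · rw [if_pos hc, if_pos hc.1]
      exact pbound x y1 y2
    · rw [if_neg hc]
      split_ifs
      · exact hp0 x
      · exact le_refl 0
  have le_my1 : ∀ a b y1 y2, nuF V1 V2 f g p a b y1 y2 ≤ my1F V1 p y1 := by
    intro a b y1 y2
    refine Finset.sum_le_sum fun x _ => ?_
    split_ifs
    · exact pvbound x y1 y2
    · exact mul_nonneg (hp0 x) (channel_nonneg hV1 x y1)
  have le_may1 : ∀ a b y1 y2, nuF V1 V2 f g p a b y1 y2 ≤ may1F V1 f p a y1 := by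
    intro a b y1 y2
    refine Finset.sum_le_sum fun x _ => ?_
    by_cases hc : f x = a ∧ g x = b
    · rw [if_pos hc, if_pos hc.1]
      exact pvbound x y1 y2
    · rw [if_neg hc]
      split_ifs
      · exact mul_nonneg (hp0 x) (channel_nonneg hV1 x y1)
      · exact le_refl 0
  have le_maby1 : ∀ a b y1 y2, nuF V1 V2 f g p a b y1 y2 ≤ maby1F V1 f g p a b y1 := by
    intro a b y1 y2
    refine Finset.sum_le_sum fun x _ => ?_
    by_cases hc : f x = a ∧ g x = b
    · rw [if_pos hc, if_pos hc]
      exact pvbound x y1 y2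
    · rw [if_neg hc, if_neg hc]
  have le_mby1 : ∀ a b y1 y2, nuF V1 V2 f g p a b y1 y2 ≤ mby1F V1 g p b y1 := by
    intro a b y1 y2
    refine Finset.sum_le_sum fun x _ => ?_
    by_cases hc : f x = a ∧ g x = b
    · rw [if_pos hc, if_pos hc.2]
      exact pvbound x y1 y2
    · rw [if_neg hc]
      split_ifs
      · exact mul_nonneg (hp0 x) (channel_nonneg hV1 x y1)
      · exact le_refl 0
  have le_mbyy : ∀ a b y1 y2, nuF V1 V2 f g p a b y1 y2 ≤ mbyyF V1 V2 g p b y1 y2 := by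
    intro a b y1 y2
    refine Finset.sum_le_sum fun x _ => ?_
    by_cases hc : f x = a ∧ g x = b
    · rw [if_pos hc, if_pos hc.2]
    · rw [if_neg hc]
      split_ifs
      · exact mul_nonneg (hp0 x) (mul_nonneg (channel_nonneg hV1 x y1) (channel_nonneg hV2 x y2))
      · exact le_refl 0
  have le_myy : ∀ a b y1 y2, nuF V1 V2 f g p a b y1 y2 ≤ myyF V1 V2 p y1 y2 := by
    intro a b y1 y2
    refine Finset.sum_le_sum fun x _ => ?_
    split_ifs
    · exact le_refl _
    · exact mul_nonneg (hp0 x) (mul_nonneg (channel_nonneg hV1 x y1) (channel_nonneg hV2 x y2))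
  -- atomic collapse identities
  have A1 : ∀ a b y1, (∑ y2, nuF V1 V2 f g p a b y1 y2) = maby1F V1 f g p a b y1 := by
    intro a b y1
    unfold nuF maby1F
    rw [Finset.sum_comm]
    refine Finset.sum_congr rfl fun x _ => ?_
    by_cases hc : f x = a ∧ g x = b
    · simp only [if_pos hc]
      rw [← Finset.mul_sum, ← Finset.mul_sum, (hV2 x).2, mul_one]
    · simp [hc]
  have A2 : ∀ a b, (∑ y1, maby1F V1 f g p a b y1) = mabF f g p a b := by
    intro a b
    unfold maby1F mabF
    rw [Finset.sum_comm]
    refine Finset.sum_congr rfl fun x _ => ?_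
    by_cases hc : f x = a ∧ g x = b
    · simp only [if_pos hc]
      rw [← Finset.mul_sum, (hV1 x).2, mul_one]
    · simp [hc]
  have A3 : ∀ b y1, (∑ y2, mbyyF V1 V2 g p b y1 y2) = mby1F V1 g p b y1 := by
    intro b y1
    unfold mbyyF mby1F
    rw [Finset.sum_comm]
    refine Finset.sum_congr rfl fun x _ => ?_
    by_cases hc : g x = b
    · simp only [if_pos hc]
      rw [← Finset.mul_sum, ← Finset.mul_sum, (hV2 x).2, mul_one]
    · simp [hc]
  have A4 : ∀ a, (∑ y1, may1F V1 f p a y1) = maF f p a := by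
    intro a
    unfold may1F maF
    rw [Finset.sum_comm]
    refine Finset.sum_congr rfl fun x _ => ?_
    by_cases hc : f x = a
    · simp only [if_pos hc]
      rw [← Finset.mul_sum, (hV1 x).2, mul_one]
    · simp [hc]
  have A5 : (∑ y1, my1F V1 p y1) = 1 := by
    unfold my1F
    rw [Finset.sum_comm]
    refine Eq.trans (Finset.sum_congr rfl fun x _ => ?_) hp1
    rw [← Finset.mul_sum, (hV1 x).2, mul_one]
  have A6 : ∀ b y1 y2, (∑ a, nuF V1 V2 f g p a b y1 y2) = mbyyF V1 V2 g p b y1 y2 := by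
    intro b y1 y2
    unfold nuF mbyyF
    rw [Finset.sum_comm]
    refine Finset.sum_congr rfl fun x _ => ?_
    by_cases hg : g x = b
    · simp [hg, Finset.sum_ite_eq]
    · simp [hg]
  have A7 : ∀ a y1, (∑ b, maby1F V1 f g p a b y1) = may1F V1 f p a y1 := by
    intro a y1
    unfold maby1F may1F
    rw [Finset.sum_comm]
    refine Finset.sum_congr rfl fun x _ => ?_
    by_cases hf : f x = a
    · simp [hf, Finset.sum_ite_eq]
    · simp [hf]
  have A8 : ∀ b y1, (∑ a, maby1F V1 f g p a b y1) = mby1F V1 g p b y1 := by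
    intro b y1
    unfold maby1F mby1F
    rw [Finset.sum_comm]
    refine Finset.sum_congr rfl fun x _ => ?_
    by_cases hg : g x = b
    · simp [hg, Finset.sum_ite_eq]
    · simp [hg]
  have A9 : ∀ a, (∑ b, mabF f g p a b) = maF f p a := by
    intro a
    unfold mabF maF
    rw [Finset.sum_comm]
    refine Finset.sum_congr rfl fun x _ => ?_
    by_cases hf : f x = a
    · simp [hf, Finset.sum_ite_eq]
    · simp [hf]
  have A10 : ∀ y1, (∑ a, may1F V1 f p a y1) = my1F V1 p y1 := by
    intro y1
    unfold may1F my1F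
    rw [Finset.sum_comm]
    refine Finset.sum_congr rfl fun x _ => ?_
    simp [Finset.sum_ite_eq]
  have A11 : ∀ y1 y2, (∑ b, mbyyF V1 V2 g p b y1 y2) = myyF V1 V2 p y1 y2 := by
    intro y1 y2
    unfold mbyyF myyF
    rw [Finset.sum_comm]
    refine Finset.sum_congr rfl fun x _ => ?_
    simp [Finset.sum_ite_eq]
  have A12 : (∑ a, maF f p a) = 1 := by
    unfold maF
    rw [Finset.sum_comm]
    refine Eq.trans (Finset.sum_congr rfl fun x _ => ?_) hp1
    simp [Finset.sum_ite_eq]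
  have A15 : ∀ y1, (∑ b, mby1F V1 g p b y1) = my1F V1 p y1 := by
    intro y1
    unfold mby1F my1F
    rw [Finset.sum_comm]
    refine Finset.sum_congr rfl fun x _ => ?_
    simp [Finset.sum_ite_eq]
  -- derived collapses
  have c_ay1 : ∀ a y1, (∑ b, ∑ y2, nuF V1 V2 f g p a b y1 y2) = may1F V1 f p a y1 := fun a y1 =>
    Eq.trans (Finset.sum_congr rfl fun b _ => A1 a b y1) (A7 a y1)
  have r3 : (∑ a, ∑ y1, may1F V1 f p a y1) = 1 :=
    Eq.trans (Finset.sum_congr rfl fun a _ => A4 a) A12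
  have r6 : ∀ a, (∑ b, ∑ y1, maby1F V1 f g p a b y1) = maF f p a := fun a =>
    Eq.trans (Finset.sum_congr rfl fun b _ => A2 a b) (A9 a)
  have r9 : ∀ y1, (∑ b, ∑ y2, mbyyF V1 V2 g p b y1 y2) = my1F V1 p y1 := fun y1 =>
    Eq.trans (Finset.sum_congr rfl fun b _ => A3 b y1) (A15 y1)
  have r10 : ∀ b y1, (∑ a, ∑ y2, nuF V1 V2 f g p a b y1 y2) = mby1F V1 g p b y1 := fun b y1 =>
    Eq.trans (Finset.sum_congr rfl fun a _ => A1 a b y1) (A8 b y1)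
  have t3 : (∑ b, ∑ y1, mby1F V1 g p b y1) = 1 := by
    rw [Finset.sum_comm]
    exact Eq.trans (Finset.sum_congr rfl fun y1 _ => A15 y1) A5
  -- the joint distribution of the composed channel
  have hjm : ∀ a b y1 y2, jointMapOut p (fun x (y : 𝒴₁ × 𝒴₂) => V1 x y.1 * V2 x y.2)
      (fun x => (f x, g x)) ((a, b), (y1, y2)) = nuF V1 V2 f g p a b y1 y2 := by
    intro a b y1 y2
    unfold jointMapOut nuF
    refine Finset.sum_congr rfl fun x _ => ?_
    simp [Prod.mk.injEq]
  have hJrow : ∀ a b, (∑ y : 𝒴₁ × 𝒴₂, jointMapOut p (fun x (y : 𝒴₁ × 𝒴₂) => V1 x y.1 * V2 x y.2)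
      (fun x => (f x, g x)) ((a, b), y)) = mabF f g p a b := by
    intro a b
    rw [Fintype.sum_prod_type]
    calc (∑ y1, ∑ y2, jointMapOut p (fun x (y : 𝒴₁ × 𝒴₂) => V1 x y.1 * V2 x y.2)
          (fun x => (f x, g x)) ((a, b), (y1, y2)))
        = ∑ y1, ∑ y2, nuF V1 V2 f g p a b y1 y2 := by
          exact Finset.sum_congr rfl fun y1 _ => Finset.sum_congr rfl fun y2 _ => hjm a b y1 y2
      _ = ∑ y1, maby1F V1 f g p a b y1 := Finset.sum_congr rfl fun y1 _ => A1 a b y1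
      _ = mabF f g p a b := A2 a b
  have hJcol : ∀ y1 y2, (∑ z : γ1 × γ2, jointMapOut p (fun x (y : 𝒴₁ × 𝒴₂) => V1 x y.1 * V2 x y.2)
      (fun x => (f x, g x)) (z, (y1, y2))) = myyF V1 V2 p y1 y2 := by
    intro y1 y2
    rw [Fintype.sum_prod_type]
    calc (∑ a, ∑ b, jointMapOut p (fun x (y : 𝒴₁ × 𝒴₂) => V1 x y.1 * V2 x y.2)
          (fun x => (f x, g x)) ((a, b), (y1, y2)))
        = ∑ a, ∑ b, nuF V1 V2 f g p a b y1 y2 := by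
          exact Finset.sum_congr rfl fun a _ => Finset.sum_congr rfl fun b _ => hjm a b y1 y2
      _ = ∑ b, ∑ a, nuF V1 V2 f g p a b y1 y2 := Finset.sum_comm
      _ = ∑ b, mbyyF V1 V2 g p b y1 y2 := Finset.sum_congr rfl fun b _ => A6 b y1 y2
      _ = myyF V1 V2 p y1 y2 := A11 y1 y2
  have hM : mutualInfo (jointMapOut p (fun x (y : 𝒴₁ × 𝒴₂) => V1 x y.1 * V2 x y.2) (fun x => (f x, g x)))
      = ∑ a, ∑ b, ∑ y1, ∑ y2, nuF V1 V2 f g p a b y1 y2 * Real.logb 2 (nuF V1 V2 f g p a b y1 y2 / (mabF f g p a b * myyF V1 V2 p y1 y2)) := by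
    unfold mutualInfo
    rw [Fintype.sum_prod_type]
    refine Finset.sum_congr rfl fun a _ => Finset.sum_congr rfl fun b _ => ?_
    rw [Fintype.sum_prod_type]
    refine Finset.sum_congr rfl fun y1 _ => Finset.sum_congr rfl fun y2 _ => ?_
    rw [hjm, hJrow, hJcol]
  -- pointwise chain-rule decomposition of the log term
  have hsplit : ∀ a b y1 y2, nuF V1 V2 f g p a b y1 y2 * Real.logb 2 (nuF V1 V2 f g p a b y1 y2 / (mabF f g p a b * myyF V1 V2 p y1 y2))
      = nuF V1 V2 f g p a b y1 y2 * Real.logb 2 (may1F V1 f p a y1 * 1 / (maF f p a * my1F V1 p y1)) + nuF V1 V2 f g p a b y1 y2 * Real.logb 2 (maby1F V1 f g p a b y1 * maF f p a / (mabF f g p a b * may1F V1 f p a y1))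
        + nuF V1 V2 f g p a b y1 y2 * Real.logb 2 (mbyyF V1 V2 g p b y1 y2 * my1F V1 p y1 / (mby1F V1 g p b y1 * myyF V1 V2 p y1 y2)) + nuF V1 V2 f g p a b y1 y2 * Real.logb 2 (nuF V1 V2 f g p a b y1 y2 * mby1F V1 g p b y1 / (maby1F V1 f g p a b y1 * mbyyF V1 V2 g p b y1 y2)) := by
    intro a b y1 y2
    rcases eq_or_lt_of_le (nn_nu a b y1 y2) with h | h
    · rw [← h]
      simp
    · have p1 : 0 < mabF f g p a b := lt_of_lt_of_le h (le_mab a b y1 y2)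
      have p2 : 0 < maF f p a := lt_of_lt_of_le h (le_ma a b y1 y2)
      have p3 : 0 < my1F V1 p y1 := lt_of_lt_of_le h (le_my1 a b y1 y2)
      have p4 : 0 < may1F V1 f p a y1 := lt_of_lt_of_le h (le_may1 a b y1 y2)
      have p5 : 0 < maby1F V1 f g p a b y1 := lt_of_lt_of_le h (le_maby1 a b y1 y2)
      have p6 : 0 < mby1F V1 g p b y1 := lt_of_lt_of_le h (le_mby1 a b y1 y2)
      have p7 : 0 < mbyyF V1 V2 g p b y1 y2 := lt_of_lt_of_le h (le_mbyy a b y1 y2)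
      have p8 : 0 < myyF V1 V2 p y1 y2 := lt_of_lt_of_le h (le_myy a b y1 y2)
      have hT1 : 0 < may1F V1 f p a y1 * 1 / (maF f p a * my1F V1 p y1) := by positivity
      have hT2 : 0 < maby1F V1 f g p a b y1 * maF f p a / (mabF f g p a b * may1F V1 f p a y1) := by positivity
      have hT3 : 0 < mbyyF V1 V2 g p b y1 y2 * my1F V1 p y1 / (mby1F V1 g p b y1 * myyF V1 V2 p y1 y2) := by positivity
      have hT4 : 0 < nuF V1 V2 f g p a b y1 y2 * mby1F V1 g p b y1 / (maby1F V1 f g p a b y1 * mbyyF V1 V2 g p b y1 y2) := by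
        positivity
      have key : nuF V1 V2 f g p a b y1 y2 / (mabF f g p a b * myyF V1 V2 p y1 y2)
          = (may1F V1 f p a y1 * 1 / (maF f p a * my1F V1 p y1))
            * (maby1F V1 f g p a b y1 * maF f p a / (mabF f g p a b * may1F V1 f p a y1))
            * (mbyyF V1 V2 g p b y1 y2 * my1F V1 p y1 / (mby1F V1 g p b y1 * myyF V1 V2 p y1 y2))
            * (nuF V1 V2 f g p a b y1 y2 * mby1F V1 g p b y1 / (maby1F V1 f g p a b y1 * mbyyF V1 V2 g p b y1 y2)) := by
        field_simp
      rw [key, Real.logb_mul (ne_of_gt (mul_pos (mul_pos hT1 hT2) hT3)) (ne_of_gt hT4),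
        Real.logb_mul (ne_of_gt (mul_pos hT1 hT2)) (ne_of_gt hT3),
        Real.logb_mul (ne_of_gt hT1) (ne_of_gt hT2)]
      ring
  -- the four slice bounds
  have bound1 : (∑ a, ∑ y1, may1F V1 f p a y1 * Real.logb 2 (may1F V1 f p a y1 * 1 / (maF f p a * my1F V1 p y1))) ≤ 1 * S1 := by
    refine slice_bound (may1F V1 f p) (maF f p) (my1F V1 p) 1 S1 nn_may1
      (fun a => (A4 a).symm) (fun y1 => (A10 y1).symm) r3.symm ?_
    intro _
    have heq : (fun z : γ1 × 𝒴₁ => may1F V1 f p z.1 z.2 / 1) = jointMapOut p V1 f := by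
      funext z
      rw [div_one]
      rfl
    rw [heq]
    exact H1 p ⟨hp0, hp1⟩
  have bound2 : ∀ a, (∑ b, ∑ y1, maby1F V1 f g p a b y1 * Real.logb 2 (maby1F V1 f g p a b y1 * maF f p a / (mabF f g p a b * may1F V1 f p a y1))) ≤ maF f p a * S2 := by
    intro a
    refine slice_bound (maby1F V1 f g p a) (mabF f g p a) (may1F V1 f p a) (maF f p a) S2 (nn_maby1 a)
      (fun b => (A2 a b).symm) (fun y1 => (A7 a y1).symm) (r6 a).symm ?_
    intro hc0
    set c := maF f p a with hcdef
    have hq : IsPMF (fun x => (if f x = a then p x else 0) / c) := by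
      constructor
      · intro x
        apply div_nonneg _ ?_
        · split_ifs
          · exact hp0 x
          · exact le_refl 0
        · rw [hcdef]
          unfold maF
          refine Finset.sum_nonneg fun x' _ => ?_
          split_ifs
          · exact hp0 x'
          · exact le_refl 0
      · rw [← Finset.sum_div]
        exact div_self hc0
    have heq : (fun z : γ2 × 𝒴₁ => maby1F V1 f g p a z.1 z.2 / c)
        = jointMapOut (fun x => (if f x = a then p x else 0) / c) V1 g := by
      funext z
      unfold jointMapOut maby1F
      rw [Finset.sum_div]
      refine Finset.sum_congr rfl fun x _ => ?_
      by_cases hf : f x = a <;> by_cases hg : g x = z.1 <;>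
        simp [hf, hg, div_mul_eq_mul_div, zero_div]
    rw [heq]
    exact H2 _ hq
  have bound3 : ∀ y1, (∑ b, ∑ y2, mbyyF V1 V2 g p b y1 y2 * Real.logb 2 (mbyyF V1 V2 g p b y1 y2 * my1F V1 p y1 / (mby1F V1 g p b y1 * myyF V1 V2 p y1 y2))) ≤ my1F V1 p y1 * S3 := by
    intro y1
    refine slice_bound (fun b y2 => mbyyF V1 V2 g p b y1 y2) (fun b => mby1F V1 g p b y1) (myyF V1 V2 p y1)
      (my1F V1 p y1) S3 (fun b y2 => nn_mbyy b y1 y2)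
      (fun b => (A3 b y1).symm) (fun y2 => (A11 y1 y2).symm) (r9 y1).symm ?_
    intro hc0
    set c := my1F V1 p y1 with hcdef
    have hq : IsPMF (fun x => p x * V1 x y1 / c) := by
      constructor
      · intro x
        apply div_nonneg (mul_nonneg (hp0 x) (channel_nonneg hV1 x y1))
        rw [hcdef]
        unfold my1F
        exact Finset.sum_nonneg fun x' _ => mul_nonneg (hp0 x') (channel_nonneg hV1 x' y1)
      · rw [← Finset.sum_div]
        exact div_self hc0
    have heq : (fun z : γ2 × 𝒴₂ => mbyyF V1 V2 g p z.1 y1 z.2 / c)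
        = jointMapOut (fun x => p x * V1 x y1 / c) V2 g := by
      funext z
      unfold jointMapOut mbyyF
      rw [Finset.sum_div]
      refine Finset.sum_congr rfl fun x _ => ?_
      by_cases hg : g x = z.1 <;>
        simp [hg, div_mul_eq_mul_div, zero_div, mul_assoc]
    rw [heq]
    exact H3 _ hq
  have bound4 : ∀ b y1, (∑ a, ∑ y2, nuF V1 V2 f g p a b y1 y2 * Real.logb 2 (nuF V1 V2 f g p a b y1 y2 * mby1F V1 g p b y1 / (maby1F V1 f g p a b y1 * mbyyF V1 V2 g p b y1 y2))) ≤ mby1F V1 g p b y1 * S4 := by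
    intro b y1
    refine slice_bound (fun a y2 => nuF V1 V2 f g p a b y1 y2) (fun a => maby1F V1 f g p a b y1)
      (fun y2 => mbyyF V1 V2 g p b y1 y2) (mby1F V1 g p b y1) S4 (fun a y2 => nn_nu a b y1 y2)
      (fun a => (A1 a b y1).symm) (fun y2 => (A6 b y1 y2).symm) (r10 b y1).symm ?_
    intro hc0
    set c := mby1F V1 g p b y1 with hcdef
    have hq : IsPMF (fun x => (if g x = b then p x * V1 x y1 else 0) / c) := by
      constructor
      · intro x
        apply div_nonneg _ ?_
        · split_ifs
          · exact mul_nonneg (hp0 x) (channel_nonneg hV1 x y1)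
          · exact le_refl 0
        · rw [hcdef]
          unfold mby1F
          refine Finset.sum_nonneg fun x' _ => ?_
          split_ifs
          · exact mul_nonneg (hp0 x') (channel_nonneg hV1 x' y1)
          · exact le_refl 0
      · rw [← Finset.sum_div]
        exact div_self hc0
    have heq : (fun z : γ1 × 𝒴₂ => nuF V1 V2 f g p z.1 b y1 z.2 / c)
        = jointMapOut (fun x => (if g x = b then p x * V1 x y1 else 0) / c) V2 f := by
      funext z
      unfold jointMapOut nuF
      rw [Finset.sum_div]
      refine Finset.sum_congr rfl fun x _ => ?_
      by_cases hf : f x = z.1 <;> by_cases hg : g x = b <;>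
        simp [hf, hg, div_mul_eq_mul_div, zero_div, mul_assoc]
    rw [heq]
    exact H4 _ hq
  -- assemble
  rw [hM]
  calc (∑ a, ∑ b, ∑ y1, ∑ y2, nuF V1 V2 f g p a b y1 y2 * Real.logb 2 (nuF V1 V2 f g p a b y1 y2 / (mabF f g p a b * myyF V1 V2 p y1 y2)))
      = ∑ a, ∑ b, ∑ y1, ∑ y2, (nuF V1 V2 f g p a b y1 y2 * Real.logb 2 (may1F V1 f p a y1 * 1 / (maF f p a * my1F V1 p y1)) + nuF V1 V2 f g p a b y1 y2 * Real.logb 2 (maby1F V1 f g p a b y1 * maF f p a / (mabF f g p a b * may1F V1 f p a y1))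
          + nuF V1 V2 f g p a b y1 y2 * Real.logb 2 (mbyyF V1 V2 g p b y1 y2 * my1F V1 p y1 / (mby1F V1 g p b y1 * myyF V1 V2 p y1 y2)) + nuF V1 V2 f g p a b y1 y2 * Real.logb 2 (nuF V1 V2 f g p a b y1 y2 * mby1F V1 g p b y1 / (maby1F V1 f g p a b y1 * mbyyF V1 V2 g p b y1 y2))) := by
        exact Finset.sum_congr rfl fun a _ => Finset.sum_congr rfl fun b _ =>
          Finset.sum_congr rfl fun y1 _ => Finset.sum_congr rfl fun y2 _ => hsplit a b y1 y2
    _ = (∑ a, ∑ b, ∑ y1, ∑ y2, nuF V1 V2 f g p a b y1 y2 * Real.logb 2 (may1F V1 f p a y1 * 1 / (maF f p a * my1F V1 p y1)))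
        + (∑ a, ∑ b, ∑ y1, ∑ y2, nuF V1 V2 f g p a b y1 y2 * Real.logb 2 (maby1F V1 f g p a b y1 * maF f p a / (mabF f g p a b * may1F V1 f p a y1)))
        + (∑ a, ∑ b, ∑ y1, ∑ y2, nuF V1 V2 f g p a b y1 y2 * Real.logb 2 (mbyyF V1 V2 g p b y1 y2 * my1F V1 p y1 / (mby1F V1 g p b y1 * myyF V1 V2 p y1 y2)))
        + (∑ a, ∑ b, ∑ y1, ∑ y2, nuF V1 V2 f g p a b y1 y2 * Real.logb 2 (nuF V1 V2 f g p a b y1 y2 * mby1F V1 g p b y1 / (maby1F V1 f g p a b y1 * mbyyF V1 V2 g p b y1 y2))) := by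
        simp only [Finset.sum_add_distrib]
    _ ≤ S1 + S2 + S3 + S4 := by
        have hB1 : (∑ a, ∑ b, ∑ y1, ∑ y2, nuF V1 V2 f g p a b y1 y2 * Real.logb 2 (may1F V1 f p a y1 * 1 / (maF f p a * my1F V1 p y1))) ≤ S1 := by
          have hreg : (∑ a, ∑ b, ∑ y1, ∑ y2, nuF V1 V2 f g p a b y1 y2 * Real.logb 2 (may1F V1 f p a y1 * 1 / (maF f p a * my1F V1 p y1)))
              = ∑ a, ∑ y1, may1F V1 f p a y1 * Real.logb 2 (may1F V1 f p a y1 * 1 / (maF f p a * my1F V1 p y1)) := by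
            refine Finset.sum_congr rfl fun a _ => ?_
            calc (∑ b, ∑ y1, ∑ y2, nuF V1 V2 f g p a b y1 y2 * Real.logb 2 (may1F V1 f p a y1 * 1 / (maF f p a * my1F V1 p y1)))
                = ∑ y1, ∑ b, ∑ y2, nuF V1 V2 f g p a b y1 y2 * Real.logb 2 (may1F V1 f p a y1 * 1 / (maF f p a * my1F V1 p y1)) := Finset.sum_comm
              _ = ∑ y1, may1F V1 f p a y1 * Real.logb 2 (may1F V1 f p a y1 * 1 / (maF f p a * my1F V1 p y1)) := by
                  refine Finset.sum_congr rfl fun y1 _ => ?_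
                  calc (∑ b, ∑ y2, nuF V1 V2 f g p a b y1 y2 * Real.logb 2 (may1F V1 f p a y1 * 1 / (maF f p a * my1F V1 p y1)))
                      = ∑ b, (∑ y2, nuF V1 V2 f g p a b y1 y2) * Real.logb 2 (may1F V1 f p a y1 * 1 / (maF f p a * my1F V1 p y1)) :=
                        Finset.sum_congr rfl fun b _ => by rw [Finset.sum_mul]
                    _ = (∑ b, ∑ y2, nuF V1 V2 f g p a b y1 y2) * Real.logb 2 (may1F V1 f p a y1 * 1 / (maF f p a * my1F V1 p y1)) := by rw [Finset.sum_mul]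
                    _ = may1F V1 f p a y1 * Real.logb 2 (may1F V1 f p a y1 * 1 / (maF f p a * my1F V1 p y1)) := by rw [c_ay1 a y1]
          rw [hreg]
          calc (∑ a, ∑ y1, may1F V1 f p a y1 * Real.logb 2 (may1F V1 f p a y1 * 1 / (maF f p a * my1F V1 p y1))) ≤ 1 * S1 := bound1
            _ = S1 := one_mul S1
        have hB2 : (∑ a, ∑ b, ∑ y1, ∑ y2, nuF V1 V2 f g p a b y1 y2 * Real.logb 2 (maby1F V1 f g p a b y1 * maF f p a / (mabF f g p a b * may1F V1 f p a y1))) ≤ S2 := by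
          have hreg : (∑ a, ∑ b, ∑ y1, ∑ y2, nuF V1 V2 f g p a b y1 y2 * Real.logb 2 (maby1F V1 f g p a b y1 * maF f p a / (mabF f g p a b * may1F V1 f p a y1)))
              = ∑ a, ∑ b, ∑ y1, maby1F V1 f g p a b y1 * Real.logb 2 (maby1F V1 f g p a b y1 * maF f p a / (mabF f g p a b * may1F V1 f p a y1)) := by
            refine Finset.sum_congr rfl fun a _ => Finset.sum_congr rfl fun b _ =>
              Finset.sum_congr rfl fun y1 _ => ?_
            calc (∑ y2, nuF V1 V2 f g p a b y1 y2 * Real.logb 2 (maby1F V1 f g p a b y1 * maF f p a / (mabF f g p a b * may1F V1 f p a y1)))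
                = (∑ y2, nuF V1 V2 f g p a b y1 y2) * Real.logb 2 (maby1F V1 f g p a b y1 * maF f p a / (mabF f g p a b * may1F V1 f p a y1)) := by rw [Finset.sum_mul]
              _ = maby1F V1 f g p a b y1 * Real.logb 2 (maby1F V1 f g p a b y1 * maF f p a / (mabF f g p a b * may1F V1 f p a y1)) := by rw [A1 a b y1]
          rw [hreg]
          calc (∑ a, ∑ b, ∑ y1, maby1F V1 f g p a b y1 * Real.logb 2 (maby1F V1 f g p a b y1 * maF f p a / (mabF f g p a b * may1F V1 f p a y1)))
              ≤ ∑ a, maF f p a * S2 := Finset.sum_le_sum fun a _ => bound2 a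
            _ = (∑ a, maF f p a) * S2 := (Finset.sum_mul ..).symm
            _ = 1 * S2 := by rw [A12]
            _ = S2 := one_mul S2
        have hB3 : (∑ a, ∑ b, ∑ y1, ∑ y2, nuF V1 V2 f g p a b y1 y2 * Real.logb 2 (mbyyF V1 V2 g p b y1 y2 * my1F V1 p y1 / (mby1F V1 g p b y1 * myyF V1 V2 p y1 y2))) ≤ S3 := by
          have hreg : (∑ a, ∑ b, ∑ y1, ∑ y2, nuF V1 V2 f g p a b y1 y2 * Real.logb 2 (mbyyF V1 V2 g p b y1 y2 * my1F V1 p y1 / (mby1F V1 g p b y1 * myyF V1 V2 p y1 y2)))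
              = ∑ y1, ∑ b, ∑ y2, mbyyF V1 V2 g p b y1 y2 * Real.logb 2 (mbyyF V1 V2 g p b y1 y2 * my1F V1 p y1 / (mby1F V1 g p b y1 * myyF V1 V2 p y1 y2)) := by
            calc (∑ a, ∑ b, ∑ y1, ∑ y2, nuF V1 V2 f g p a b y1 y2 * Real.logb 2 (mbyyF V1 V2 g p b y1 y2 * my1F V1 p y1 / (mby1F V1 g p b y1 * myyF V1 V2 p y1 y2)))
                = ∑ b, ∑ a, ∑ y1, ∑ y2, nuF V1 V2 f g p a b y1 y2 * Real.logb 2 (mbyyF V1 V2 g p b y1 y2 * my1F V1 p y1 / (mby1F V1 g p b y1 * myyF V1 V2 p y1 y2)) := Finset.sum_comm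
              _ = ∑ b, ∑ y1, ∑ a, ∑ y2, nuF V1 V2 f g p a b y1 y2 * Real.logb 2 (mbyyF V1 V2 g p b y1 y2 * my1F V1 p y1 / (mby1F V1 g p b y1 * myyF V1 V2 p y1 y2)) :=
                  Finset.sum_congr rfl fun b _ => Finset.sum_comm
              _ = ∑ b, ∑ y1, ∑ y2, ∑ a, nuF V1 V2 f g p a b y1 y2 * Real.logb 2 (mbyyF V1 V2 g p b y1 y2 * my1F V1 p y1 / (mby1F V1 g p b y1 * myyF V1 V2 p y1 y2)) :=
                  Finset.sum_congr rfl fun b _ => Finset.sum_congr rfl fun y1 _ =>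
                    Finset.sum_comm
              _ = ∑ b, ∑ y1, ∑ y2, mbyyF V1 V2 g p b y1 y2 * Real.logb 2 (mbyyF V1 V2 g p b y1 y2 * my1F V1 p y1 / (mby1F V1 g p b y1 * myyF V1 V2 p y1 y2)) := by
                  refine Finset.sum_congr rfl fun b _ => Finset.sum_congr rfl fun y1 _ =>
                    Finset.sum_congr rfl fun y2 _ => ?_
                  calc (∑ a, nuF V1 V2 f g p a b y1 y2 * Real.logb 2 (mbyyF V1 V2 g p b y1 y2 * my1F V1 p y1 / (mby1F V1 g p b y1 * myyF V1 V2 p y1 y2)))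
                      = (∑ a, nuF V1 V2 f g p a b y1 y2) * Real.logb 2 (mbyyF V1 V2 g p b y1 y2 * my1F V1 p y1 / (mby1F V1 g p b y1 * myyF V1 V2 p y1 y2)) := by rw [Finset.sum_mul]
                    _ = mbyyF V1 V2 g p b y1 y2 * Real.logb 2 (mbyyF V1 V2 g p b y1 y2 * my1F V1 p y1 / (mby1F V1 g p b y1 * myyF V1 V2 p y1 y2)) := by rw [A6 b y1 y2]
              _ = ∑ y1, ∑ b, ∑ y2, mbyyF V1 V2 g p b y1 y2 * Real.logb 2 (mbyyF V1 V2 g p b y1 y2 * my1F V1 p y1 / (mby1F V1 g p b y1 * myyF V1 V2 p y1 y2)) := Finset.sum_comm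
          rw [hreg]
          calc (∑ y1, ∑ b, ∑ y2, mbyyF V1 V2 g p b y1 y2 * Real.logb 2 (mbyyF V1 V2 g p b y1 y2 * my1F V1 p y1 / (mby1F V1 g p b y1 * myyF V1 V2 p y1 y2)))
              ≤ ∑ y1, my1F V1 p y1 * S3 := Finset.sum_le_sum fun y1 _ => bound3 y1
            _ = (∑ y1, my1F V1 p y1) * S3 := (Finset.sum_mul ..).symm
            _ = 1 * S3 := by rw [A5]
            _ = S3 := one_mul S3
        have hB4 : (∑ a, ∑ b, ∑ y1, ∑ y2, nuF V1 V2 f g p a b y1 y2 * Real.logb 2 (nuF V1 V2 f g p a b y1 y2 * mby1F V1 g p b y1 / (maby1F V1 f g p a b y1 * mbyyF V1 V2 g p b y1 y2))) ≤ S4 := by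
          have hreg : (∑ a, ∑ b, ∑ y1, ∑ y2, nuF V1 V2 f g p a b y1 y2 * Real.logb 2 (nuF V1 V2 f g p a b y1 y2 * mby1F V1 g p b y1 / (maby1F V1 f g p a b y1 * mbyyF V1 V2 g p b y1 y2)))
              = ∑ b, ∑ y1, ∑ a, ∑ y2, nuF V1 V2 f g p a b y1 y2 * Real.logb 2 (nuF V1 V2 f g p a b y1 y2 * mby1F V1 g p b y1 / (maby1F V1 f g p a b y1 * mbyyF V1 V2 g p b y1 y2)) := by
            calc (∑ a, ∑ b, ∑ y1, ∑ y2, nuF V1 V2 f g p a b y1 y2 * Real.logb 2 (nuF V1 V2 f g p a b y1 y2 * mby1F V1 g p b y1 / (maby1F V1 f g p a b y1 * mbyyF V1 V2 g p b y1 y2)))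
                = ∑ b, ∑ a, ∑ y1, ∑ y2, nuF V1 V2 f g p a b y1 y2 * Real.logb 2 (nuF V1 V2 f g p a b y1 y2 * mby1F V1 g p b y1 / (maby1F V1 f g p a b y1 * mbyyF V1 V2 g p b y1 y2)) := Finset.sum_comm
              _ = ∑ b, ∑ y1, ∑ a, ∑ y2, nuF V1 V2 f g p a b y1 y2 * Real.logb 2 (nuF V1 V2 f g p a b y1 y2 * mby1F V1 g p b y1 / (maby1F V1 f g p a b y1 * mbyyF V1 V2 g p b y1 y2)) :=
                  Finset.sum_congr rfl fun b _ => Finset.sum_comm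
          rw [hreg]
          calc (∑ b, ∑ y1, ∑ a, ∑ y2, nuF V1 V2 f g p a b y1 y2 * Real.logb 2 (nuF V1 V2 f g p a b y1 y2 * mby1F V1 g p b y1 / (maby1F V1 f g p a b y1 * mbyyF V1 V2 g p b y1 y2)))
              ≤ ∑ b, ∑ y1, mby1F V1 g p b y1 * S4 :=
                Finset.sum_le_sum fun b _ => Finset.sum_le_sum fun y1 _ => bound4 b y1
            _ = (∑ b, ∑ y1, mby1F V1 g p b y1) * S4 := by
                rw [Finset.sum_mul]
                exact Finset.sum_congr rfl fun b _ => (Finset.sum_mul ..).symm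
            _ = 1 * S4 := by rw [t3]
            _ = S4 := one_mul S4
        exact add_le_add (add_le_add (add_le_add hB1 hB2) hB3) hB4

/-- Theorem 3: general composition. If `W_j` satisfies
`ε_j`-information privacy w.r.t. `ℙ_b^j` and is `(b,δ_j)`-balanced (`j = 1,2`), and
`K₁` (resp. `K₂`) is the sup over joint input distributions on `𝒳 = 𝒳¹ × 𝒳²` and
coordinates `i` of the information `I(X_i²; Y₁)` leaked through `U₁(y₁|x) = W₁(y₁|x¹)`
(resp. `I(X_i¹; Y₂)` through `U₂(y₂|x) = W₂(y₂|x²)`), then the composition channel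
`p(y|x) = W₁(y₁|x¹)W₂(y₂|x²)` satisfies, for every joint input distribution and every
individual `i`, `I(X_i; (Y₁,Y₂)) ≤ ε₁ + ε₂ + δ₁ + δ₂ + K₁ + K₂`. -/
theorem general_composition_privacy
    {n : ℕ} {A B : Fin n → Type*} [∀ i, Fintype (A i)] [∀ i, Fintype (B i)]
    [∀ i, DecidableEq (A i)] [∀ i, DecidableEq (B i)]
    [∀ i, Nonempty (A i)] [∀ i, Nonempty (B i)]
    {𝒴₁ 𝒴₂ : Type*} [Fintype 𝒴₁] [Fintype 𝒴₂] [Nonempty 𝒴₁] [Nonempty 𝒴₂]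
    (W₁ : (∀ i, A i) → 𝒴₁ → ℝ) (hW₁ : IsChannel W₁)
    (W₂ : (∀ i, B i) → 𝒴₂ → ℝ) (hW₂ : IsChannel W₂)
    (b ε₁ ε₂ δ₁ δ₂ K₁ K₂ : ℝ) (hb : 0 ≤ b)
    (hip₁ : indCap W₁ (PMFb (∀ i, A i) b) ≤ ε₁)
    (hip₂ : indCap W₂ (PMFb (∀ i, B i) b) ≤ ε₂)
    (hbal₁ : indCap W₁ (allPMF (∀ i, A i)) = indCap W₁ (PMFb (∀ i, A i) b) + δ₁)
    (hbal₂ : indCap W₂ (allPMF (∀ i, B i)) = indCap W₂ (PMFb (∀ i, B i) b) + δ₂)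
    (hK₁ : K₁ = sSup {r | ∃ q : (∀ i, A i) × (∀ i, B i) → ℝ, IsPMF q ∧ ∃ i : Fin n,
      r = mutualInfo (jointMapOut q (fun x y₁ => W₁ x.1 y₁) (fun x => x.2 i))})
    (hK₂ : K₂ = sSup {r | ∃ q : (∀ i, A i) × (∀ i, B i) → ℝ, IsPMF q ∧ ∃ i : Fin n,
      r = mutualInfo (jointMapOut q (fun x y₂ => W₂ x.2 y₂) (fun x => x.1 i))}) :
    ∀ p : (∀ i, A i) × (∀ i, B i) → ℝ, IsPMF p → ∀ i : Fin n,
      mutualInfo (jointMapOut p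
          (fun x (y : 𝒴₁ × 𝒴₂) => W₁ x.1 y.1 * W₂ x.2 y.2)
          (fun x => (x.1 i, x.2 i))) ≤ ε₁ + ε₂ + δ₁ + δ₂ + K₁ + K₂ := by
  intro p hp i
  classical
  -- BddAbove for the four sup-sets
  have hbdd1 : BddAbove {r | ∃ q ∈ allPMF (∀ i, A i), ∃ i : Fin n,
      r = mutualInfo (jointMapOut q W₁ (fun x => x i))} := by
    refine ⟨2 * Fintype.card 𝒴₁, ?_⟩
    rintro r ⟨q, hq, i', rfl⟩
    exact mutualInfo_le_two_card _ (jointMapOut_isPMF hq hW₁ _)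
  have hbdd2 : BddAbove {r | ∃ q ∈ allPMF (∀ i, B i), ∃ i : Fin n,
      r = mutualInfo (jointMapOut q W₂ (fun x => x i))} := by
    refine ⟨2 * Fintype.card 𝒴₂, ?_⟩
    rintro r ⟨q, hq, i', rfl⟩
    exact mutualInfo_le_two_card _ (jointMapOut_isPMF hq hW₂ _)
  have hbddK1 : BddAbove {r | ∃ q : (∀ i, A i) × (∀ i, B i) → ℝ, IsPMF q ∧ ∃ i : Fin n,
      r = mutualInfo (jointMapOut q (fun x y₁ => W₁ x.1 y₁) (fun x => x.2 i))} := by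
    refine ⟨2 * Fintype.card 𝒴₁, ?_⟩
    rintro r ⟨q, hq, i', rfl⟩
    exact mutualInfo_le_two_card _ (jointMapOut_isPMF hq (fun x => hW₁ x.1) _)
  have hbddK2 : BddAbove {r | ∃ q : (∀ i, A i) × (∀ i, B i) → ℝ, IsPMF q ∧ ∃ i : Fin n,
      r = mutualInfo (jointMapOut q (fun x y₂ => W₂ x.2 y₂) (fun x => x.1 i))} := by
    refine ⟨2 * Fintype.card 𝒴₂, ?_⟩
    rintro r ⟨q, hq, i', rfl⟩
    exact mutualInfo_le_two_card _ (jointMapOut_isPMF hq (fun x => hW₂ x.2) _)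
  -- the four hypotheses of the core decomposition
  have h1 : ∀ q : (∀ i, A i) × (∀ i, B i) → ℝ, IsPMF q →
      mutualInfo (jointMapOut q (fun x y₁ => W₁ x.1 y₁) (fun x => x.1 i)) ≤ ε₁ + δ₁ := by
    intro q hq
    have hq1 : IsPMF (fun x1 : ∀ i, A i => ∑ x2 : ∀ i, B i, q (x1, x2)) := by
      constructor
      · intro x1
        exact Finset.sum_nonneg fun x2 _ => hq.1 _
      · have h := hq.2
        rw [Fintype.sum_prod_type] at h
        exact h
    have heq : jointMapOut q (fun x y₁ => W₁ x.1 y₁) (fun x => x.1 i)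
        = jointMapOut (fun x1 => ∑ x2, q (x1, x2)) W₁ (fun x1 => x1 i) := by
      funext z
      unfold jointMapOut
      rw [Fintype.sum_prod_type]
      refine Finset.sum_congr rfl fun x1 _ => ?_
      show (∑ x2, if x1 i = z.1 then q (x1, x2) * W₁ x1 z.2 else 0) = _
      by_cases h : x1 i = z.1
      · simp only [h, if_true]
        rw [← Finset.sum_mul]
      · simp [h]
    rw [heq]
    have hle : mutualInfo (jointMapOut (fun x1 => ∑ x2, q (x1, x2)) W₁ (fun x1 => x1 i))
        ≤ indCap W₁ (allPMF (∀ i, A i)) := by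
      unfold indCap
      exact le_csSup hbdd1 ⟨_, hq1, i, rfl⟩
    rw [hbal₁] at hle
    linarith
  have h2 : ∀ q : (∀ i, A i) × (∀ i, B i) → ℝ, IsPMF q →
      mutualInfo (jointMapOut q (fun x y₁ => W₁ x.1 y₁) (fun x => x.2 i)) ≤ K₁ := by
    intro q hq
    rw [hK₁]
    exact le_csSup hbddK1 ⟨q, hq, i, rfl⟩
  have h3 : ∀ q : (∀ i, A i) × (∀ i, B i) → ℝ, IsPMF q →
      mutualInfo (jointMapOut q (fun x y₂ => W₂ x.2 y₂) (fun x => x.2 i)) ≤ ε₂ + δ₂ := by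
    intro q hq
    have hq2 : IsPMF (fun x2 : ∀ i, B i => ∑ x1 : ∀ i, A i, q (x1, x2)) := by
      constructor
      · intro x2
        exact Finset.sum_nonneg fun x1 _ => hq.1 _
      · have h := hq.2
        rw [Fintype.sum_prod_type_right] at h
        exact h
    have heq : jointMapOut q (fun x y₂ => W₂ x.2 y₂) (fun x => x.2 i)
        = jointMapOut (fun x2 => ∑ x1, q (x1, x2)) W₂ (fun x2 => x2 i) := by
      funext z
      unfold jointMapOut
      rw [Fintype.sum_prod_type_right]
      refine Finset.sum_congr rfl fun x2 _ => ?_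
      show (∑ x1, if x2 i = z.1 then q (x1, x2) * W₂ x2 z.2 else 0) = _
      by_cases h : x2 i = z.1
      · simp only [h, if_true]
        rw [← Finset.sum_mul]
      · simp [h]
    rw [heq]
    have hle : mutualInfo (jointMapOut (fun x2 => ∑ x1, q (x1, x2)) W₂ (fun x2 => x2 i))
        ≤ indCap W₂ (allPMF (∀ i, B i)) := by
      unfold indCap
      exact le_csSup hbdd2 ⟨_, hq2, i, rfl⟩
    rw [hbal₂] at hle
    linarith
  have h4 : ∀ q : (∀ i, A i) × (∀ i, B i) → ℝ, IsPMF q →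
      mutualInfo (jointMapOut q (fun x y₂ => W₂ x.2 y₂) (fun x => x.1 i)) ≤ K₂ := by
    intro q hq
    rw [hK₂]
    exact le_csSup hbddK2 ⟨q, hq, i, rfl⟩
  have main := @core_decomp ((∀ i, A i) × (∀ i, B i)) (A i) (B i) 𝒴₁ 𝒴₂ _ _ _ _ _ _ _
    (fun x y₁ => W₁ x.1 y₁) (fun x => hW₁ x.1)
    (fun x y₂ => W₂ x.2 y₂) (fun x => hW₂ x.2)
    (fun x => x.1 i) (fun x => x.2 i) p hp (ε₁ + δ₁) K₁ (ε₂ + δ₂) K₂ h1 h2 h3 h4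
  exact le_trans main (by linarith)
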